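/- arXiv:1502.01306 — 2 statements merged into one kernel-verified Lean document; each statement's English description precedes it below -/
import Mathlib

section
/- Let d ≥ 1, let (Y^x)_{x∈ℤ^d} be a coalescing family of trajectories in ℤ^d, let T ≥ 0, let L ≥ 3 be an integer, let ξ : ℤ^d → {0,1} and let z ∈ ℤ^d. If B(z,L) ↔*_ξ B(z,2L)^c, then at least one of the following holds: (a) there exists x ∈ B(z,2L) with sup_{0≤t≤T} |Y^x_t − x| > L/4; (b) there exist x, y ∈ B(z,2L) with |x−y| = 1, ξ(x) = ξ(y) = 1, sup_{0≤t≤T} |Y^x_t − x| ≤ L/4, sup_{0≤t≤T} |Y^y_t − y| ≤ L/4, and Y^x_t ≠ Y^y_t for all 0 ≤ t ≤ T. -/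
/-- The ℓ∞ norm of a point of ℤ^d. -/
def normInf {d : ℕ} (x : Fin d → ℤ) : ℤ :=
  ((Finset.univ.sup fun i => (x i).natAbs : ℕ) : ℤ)

/-- The ℓ∞ ball `B(z, r)` in ℤ^d. -/
def ballInf {d : ℕ} (z : Fin d → ℤ) (r : ℤ) : Set (Fin d → ℤ) :=
  {y | normInf (y - z) ≤ r}

/-- A coalescing family of trajectories in ℤ^d: `Y x 0 = x` for every `x`, and once
two trajectories meet they stay together forever. -/
def IsCoalescing {d : ℕ} (Y : (Fin d → ℤ) → ℝ → (Fin d → ℤ)) : Prop :=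
  (∀ x, Y x 0 = x) ∧
  (∀ x y s, 0 ≤ s → Y x s = Y y s → ∀ t, s ≤ t → Y x t = Y y t)

/-- `A ↔*_ξ B`: there is a *-connected path of points where `ξ = 1`, starting at a
*-neighbor of a point of `A` and ending at a *-neighbor of a point of `B`. -/
def StarConn {d : ℕ} (ξ : (Fin d → ℤ) → Fin 2) (A B : Set (Fin d → ℤ)) : Prop :=
  ∃ (n : ℕ) (γ : ℕ → Fin d → ℤ),
    (∀ i < n, normInf (γ (i + 1) - γ i) = 1) ∧
    (∀ i ≤ n, ξ (γ i) = 1) ∧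
    (∃ a ∈ A, normInf (γ 0 - a) = 1) ∧
    (∃ b ∈ B, normInf (γ n - b) = 1)

lemma normInf_triangle {d : ℕ} (x y : Fin d → ℤ) :
    normInf (x + y) ≤ normInf x + normInf y := by
  unfold normInf
  have h : (Finset.univ.sup fun i => ((x + y) i).natAbs) ≤
      (Finset.univ.sup fun i => (x i).natAbs) + (Finset.univ.sup fun i => (y i).natAbs) := by
    apply Finset.sup_le
    intro i _
    calc ((x + y) i).natAbs = (x i + y i).natAbs := rfl
      _ ≤ (x i).natAbs + (y i).natAbs := Int.natAbs_add_le _ _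
      _ ≤ _ := add_le_add (Finset.le_sup (f := fun j => (x j).natAbs) (Finset.mem_univ i)) (Finset.le_sup (f := fun j => (y j).natAbs) (Finset.mem_univ i))
  exact_mod_cast h

lemma normInf_sub_le {d : ℕ} (x y w : Fin d → ℤ) :
    normInf (x - w) ≤ normInf (x - y) + normInf (y - w) := by
  have := normInf_triangle (x - y) (y - w)
  simpa using this

lemma normInf_neg {d : ℕ} (x : Fin d → ℤ) : normInf (-x) = normInf x := by
  unfold normInf
  congr 1
  apply Finset.sup_congr rfl
  intro i _
  simp [Int.natAbs_neg]

lemma normInf_sub_comm {d : ℕ} (x y : Fin d → ℤ) : normInf (x - y) = normInf (y - x) := by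
  rw [← normInf_neg (x - y)]; congr 1; abel

/-- If `B(z,L) ↔*_ξ B(z,2L)ᶜ`, then either (a) some walker started in `B(z,2L)`
moves ℓ∞-distance more than `L/4` from its start before time `T`, or (b) there are
*-neighbors `x, y ∈ B(z,2L)` with `ξ(x) = ξ(y) = 1` whose walkers stay within
distance `L/4` of their starting points up to time `T` and do not meet before
time `T`. -/
theorem crossing_implies_escape_or_pair {d : ℕ} (hd : 1 ≤ d)
    (Y : (Fin d → ℤ) → ℝ → (Fin d → ℤ)) (hY : IsCoalescing Y)
    (T : ℝ) (hT : 0 ≤ T) (L : ℕ) (hL : 3 ≤ L)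
    (ξ : (Fin d → ℤ) → Fin 2) (z : Fin d → ℤ)
    (hcross : StarConn ξ (ballInf z (L : ℤ)) (ballInf z (2 * (L : ℤ)))ᶜ) :
    (∃ x ∈ ballInf z (2 * (L : ℤ)), ∃ t : ℝ, 0 ≤ t ∧ t ≤ T ∧
      (L : ℤ) < 4 * normInf (Y x t - x)) ∨
    (∃ x ∈ ballInf z (2 * (L : ℤ)), ∃ y ∈ ballInf z (2 * (L : ℤ)),
      normInf (x - y) = 1 ∧ ξ x = 1 ∧ ξ y = 1 ∧
      (∀ t : ℝ, 0 ≤ t → t ≤ T → 4 * normInf (Y x t - x) ≤ (L : ℤ)) ∧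
      (∀ t : ℝ, 0 ≤ t → t ≤ T → 4 * normInf (Y y t - y) ≤ (L : ℤ)) ∧
      (∀ t : ℝ, 0 ≤ t → t ≤ T → Y x t ≠ Y y t)) := by
  obtain ⟨n, γ, hstep, hξ, ⟨a, ha, ha1⟩, ⟨b, hb, hb1⟩⟩ := hcross
  have hL' : (3 : ℤ) ≤ (L : ℤ) := by exact_mod_cast hL
  -- distance of γ 0 to z
  have hγ0 : normInf (γ 0 - z) ≤ (L : ℤ) + 1 := by
    have := normInf_sub_le (γ 0) a z
    have haz : normInf (a - z) ≤ (L : ℤ) := ha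
    omega
  -- distance of γ n to z
  have hγn : 2 * (L : ℤ) ≤ normInf (γ n - z) := by
    have hbz : ¬ normInf (b - z) ≤ 2 * (L : ℤ) := hb
    have := normInf_sub_le b (γ n) z
    have hbg : normInf (b - γ n) = 1 := by rw [normInf_sub_comm]; exact hb1
    omega
  -- first index reaching distance ≥ 2L
  classical
  have hex : ∃ k, 2 * (L : ℤ) ≤ normInf (γ k - z) := ⟨n, hγn⟩
  obtain ⟨m, hm2L, hmn, hmin⟩ :
      ∃ m, 2 * (L : ℤ) ≤ normInf (γ m - z) ∧ m ≤ n ∧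
        ∀ j < m, ¬ (2 * (L : ℤ) ≤ normInf (γ j - z)) :=
    ⟨Nat.find hex, Nat.find_spec hex, Nat.find_le hγn, fun j hj => Nat.find_min hex hj⟩
  -- m ≠ 0
  have hm0 : m ≠ 0 := by
    intro h
    rw [h] at hm2L
    omega
  -- for i < m, γ i is strictly inside (or i ≤ n fails? no: i < m ≤ n)
  have hlt : ∀ i < m, normInf (γ i - z) < 2 * (L : ℤ) := by
    intro i hi
    have := hmin i hi
    omega
  -- γ m within 2L
  have hmem : ∀ i ≤ m, γ i ∈ ballInf z (2 * (L : ℤ)) := by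
    intro i hi
    rcases Nat.lt_or_ge i m with h | h
    · exact le_of_lt (hlt i h)
    · have him : i = m := le_antisymm hi h
      obtain ⟨k, hk⟩ := Nat.exists_eq_succ_of_ne_zero hm0
      have hk' : k < m := by omega
      have h1 : normInf (γ (k + 1) - γ k) = 1 := hstep k (by omega)
      have h2 := normInf_sub_le (γ (k + 1)) (γ k) z
      have h3 := hlt k hk'
      show normInf (γ i - z) ≤ 2 * (L : ℤ)
      rw [him, hk, Nat.succ_eq_add_one]
      omega
  by_cases hA : ∃ x ∈ ballInf z (2 * (L : ℤ)), ∃ t : ℝ, 0 ≤ t ∧ t ≤ T ∧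
      (L : ℤ) < 4 * normInf (Y x t - x)
  · exact Or.inl hA
  push_neg at hA
  right
  by_cases hB : ∃ i < m, ∀ t : ℝ, 0 ≤ t → t ≤ T → Y (γ i) t ≠ Y (γ (i + 1)) t
  · obtain ⟨i, him, hne⟩ := hB
    refine ⟨γ (i + 1), hmem _ (by omega), γ i, hmem _ (by omega),
      hstep i (by omega), hξ _ (by omega), hξ _ (by omega),
      fun t ht ht' => hA _ (hmem _ (by omega)) t ht ht',
      fun t ht ht' => hA _ (hmem _ (by omega)) t ht ht',
      fun t ht ht' h => hne t ht ht' h.symm⟩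
  push_neg at hB
  exfalso
  -- every consecutive pair meets, hence meets at time T
  have hmeet : ∀ i < m, Y (γ i) T = Y (γ (i + 1)) T := by
    intro i hi
    obtain ⟨t, ht0, htT, heq⟩ := hB i hi
    exact hY.2 _ _ t ht0 heq T htT
  have hchain : ∀ k ≤ m, Y (γ 0) T = Y (γ k) T := by
    intro k
    induction k with
    | zero => intro _; rfl
    | succ k ih => intro hk; exact (ih (by omega)).trans (hmeet k (by omega))
  have hYm := hchain m le_rfl
  -- distance contradiction
  have h0 := hA (γ 0) (hmem 0 (Nat.zero_le _)) T hT le_rfl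
  have hm := hA (γ m) (hmem m le_rfl) T hT le_rfl
  have d1 := normInf_sub_le (γ 0) (Y (γ 0) T) (γ m)
  have d1' : normInf (Y (γ 0) T - γ m) = normInf (Y (γ m) T - γ m) := by rw [hYm]
  have d2 : normInf (γ 0 - Y (γ 0) T) = normInf (Y (γ 0) T - γ 0) := normInf_sub_comm _ _
  have d3 : 2 * (L : ℤ) ≤ normInf (γ m - γ 0) + normInf (γ 0 - z) :=
    le_trans hm2L (normInf_sub_le (γ m) (γ 0) z)
  have d4 : normInf (γ m - γ 0) = normInf (γ 0 - γ m) := normInf_sub_comm _ _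
  omega
end

section
/- For every integer d ≥ 1 and every real c > 0 there exists a constant C = C(d,c) < ∞ such that for every v ∈ ℤ^d and every real t ≥ 1: Σ_{w ∈ ℤ^d} exp(−c·|w|²/t) · (|v − w| + 1)^{1−d} ≤ C·t^{1/2}, where |x| denotes the ℓ^∞ norm max_{1≤i≤d} |x_i| of x ∈ ℤ^d. -/
open Finset Real

section Norm

variable {d : ℕ}

lemma normInf_nonneg (u : Fin d → ℤ) : 0 ≤ normInf u := Int.natCast_nonneg _

lemma normInf_eq_norm (u : Fin d → ℤ) : (normInf u : ℝ) = ‖u‖ := by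
  simp only [normInf, Pi.norm_def, ← NNReal.natCast_natAbs, ← Nat.cast_finsetSup,
    Int.cast_natCast, NNReal.coe_natCast]

lemma mem_Icc_iff_normInf_le {u : Fin d → ℤ} {n : ℕ} :
    u ∈ Icc (-n : Fin d → ℤ) n ↔ normInf u ≤ n := by
  simp only [mem_Icc, Pi.le_def, normInf, Nat.cast_le, Finset.sup_le_iff, mem_univ, true_implies,
    Pi.neg_apply, Pi.natCast_apply, ← forall_and]
  exact forall_congr' fun i => by omega

lemma mem_box_iff_normInf_eq {u : Fin d → ℤ} {k : ℕ} : u ∈ box k ↔ normInf u = k := by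
  have := normInf_nonneg u
  rcases k with _ | k
  · have hIcc := mem_Icc_iff_normInf_le (u := u) (n := 0)
    simp only [Nat.cast_zero, neg_zero, Icc_self, mem_singleton] at hIcc
    simp only [box_zero, mem_singleton, hIcc, Nat.cast_zero]
    omega
  · simp only [box_succ_eq_sdiff, mem_sdiff, mem_Icc_iff_normInf_le]
    push_cast
    omega

lemma norm_eq_of_mem_box {u : Fin d → ℤ} {k : ℕ} (hu : u ∈ box k) : ‖u‖ = k := by
  rw [← normInf_eq_norm, mem_box_iff_normInf_eq.mp hu, Int.cast_natCast]

lemma sq_sub_normInf_le_of_mem_box {u : Fin d → ℤ} {k : ℕ} (hu : u ∈ box k) (v : Fin d → ℤ) :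
    (((k - normInf v : ℤ)) : ℝ) ^ 2 ≤ ‖v - u‖ ^ 2 := by
  rw [← sq_abs, norm_sub_rev]
  gcongr
  push_cast
  rw [← norm_eq_of_mem_box hu, normInf_eq_norm]
  exact abs_norm_sub_norm_le u v

open scoped ENNReal in
lemma tsum_eq_tsum_sum_box (f : (Fin d → ℤ) → ℝ≥0∞) :
    ∑' u, f u = ∑' k : ℕ, ∑ u ∈ box k, f u := by
  rw [← ENNReal.tsum_fiberwise f fun u => (normInf u).toNat]
  congr! with k
  have hfiber : (fun u : Fin d → ℤ => (normInf u).toNat) ⁻¹' {k} =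
      ((box k : Finset (Fin d → ℤ)) : Set (Fin d → ℤ)) := by
    ext u
    have := normInf_nonneg u
    simp only [Set.mem_preimage, Set.mem_singleton_iff, mem_coe, mem_box_iff_normInf_eq]
    omega
  rw [hfiber]
  exact Finset.tsum_subtype (box k) f

end Norm

lemma card_box_le {ι : Type*} [Fintype ι] [DecidableEq ι] [Nonempty ι] (k : ℕ) :
    #(box k : Finset (ι → ℤ)) ≤ 2 * Fintype.card ι * (2 * k + 1) ^ (Fintype.card ι - 1) := by
  have hd := Fintype.card_pos (α := ι)
  rcases k with _ | k
  · simp only [box_zero, card_singleton, mul_zero, zero_add, one_pow, mul_one]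
    omega
  · rw [box_succ_eq_sdiff, card_sdiff_of_subset (Icc_subset_Icc (by simp) (by simp)),
      Pi.card_Icc, Pi.card_Icc]
    simp only [Pi.neg_apply, Pi.natCast_apply, Int.card_Icc, prod_const, card_univ]
    grind [abs_pow_sub_pow_le (α := ℤ) (2 * k + 3) (2 * k + 1) (Fintype.card ι)]

lemma sum_box_exp_mul_zpow_le {d : ℕ} (hd : 1 ≤ d) {c t : ℝ} (hc : 0 ≤ c) (ht : 0 < t)
    (v : Fin d → ℤ) (k : ℕ) :
    ∑ u ∈ box k, exp (-c * ‖v - u‖ ^ 2 / t) * (‖u‖ + 1) ^ ((1 : ℤ) - d) ≤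
      d * 2 ^ d * exp (-c * ((k - normInf v : ℤ) : ℝ) ^ 2 / t) := by
  obtain ⟨m, rfl⟩ : ∃ m, d = m + 1 := ⟨d - 1, by omega⟩
  set G := exp (-c * ((k - normInf v : ℤ) : ℝ) ^ 2 / t)
  have hterm : ∀ u ∈ box k, exp (-c * ‖v - u‖ ^ 2 / t) * (‖u‖ + 1) ^ ((1 : ℤ) - (m + 1 : ℕ)) ≤
      G * ((k + 1 : ℝ) ^ m)⁻¹ := by
    intro u hu
    have hexp : (1 : ℤ) - (m + 1 : ℕ) = -(m : ℤ) := by push_cast; ring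
    rw [norm_eq_of_mem_box hu, hexp, zpow_neg, zpow_natCast]
    simp only [G, neg_mul, neg_div]
    gcongr exp (-(c * ?_ / t)) * _
    exact sq_sub_normInf_le_of_mem_box hu v
  have hcard : (#(box k : Finset (Fin (m + 1) → ℤ)) : ℝ) ≤ 2 * (m + 1) * (2 * k + 1) ^ m := by
    exact_mod_cast (card_box_le k).trans_eq (by simp)
  have hratio : (2 * k + 1 : ℝ) ^ m * ((k + 1 : ℝ) ^ m)⁻¹ ≤ 2 ^ m := by
    rw [← div_eq_mul_inv, div_le_iff₀ (by positivity), ← mul_pow]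
    gcongr
    linarith
  calc ∑ u ∈ box k, exp (-c * ‖v - u‖ ^ 2 / t) * (‖u‖ + 1) ^ ((1 : ℤ) - (m + 1 : ℕ))
      ≤ ∑ u ∈ box k, G * ((k + 1 : ℝ) ^ m)⁻¹ := sum_le_sum hterm
    _ = #(box k : Finset (Fin (m + 1) → ℤ)) * (G * ((k + 1 : ℝ) ^ m)⁻¹) := by
        rw [sum_const, nsmul_eq_mul]
    _ ≤ 2 * (m + 1) * (2 * k + 1) ^ m * (G * ((k + 1 : ℝ) ^ m)⁻¹) := by gcongr
    _ = 2 * (m + 1) * G * ((2 * k + 1) ^ m * ((k + 1 : ℝ) ^ m)⁻¹) := by ring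
    _ ≤ 2 * (m + 1) * G * 2 ^ m := by gcongr
    _ = ((m + 1 : ℕ) : ℝ) * 2 ^ (m + 1) * G := by push_cast; ring

lemma summable_exp_neg_mul_int_sq {a : ℝ} (ha : 0 < a) :
    Summable fun n : ℤ => exp (-a * n ^ 2) := by
  simpa [mul_sub, ← mul_assoc, mul_div_cancel₀ _ pi_pos.ne'] using
    summable_pow_mul_jacobiTheta₂_term_bound 0 (div_pos ha pi_pos) 0

lemma tsum_exp_neg_mul_int_sq_div_le {c t : ℝ} (hc : 0 < c) (ht : 1 ≤ t) :
    ∑' n : ℤ, exp (-c * n ^ 2 / t) ≤ √(π / c) * (∑' n : ℤ, exp (-(π ^ 2 / c) * n ^ 2)) * √t := by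
  have ht0 : 0 < t := by linarith
  set a := c / (π * t) with ha_def
  have ha : 0 < a := by positivity
  have hexp (n : ℤ) : -c * n ^ 2 / t = -π * a * n ^ 2 := by
    rw [ha_def]; field_simp
  have hcoeff : 1 / a ^ (1 / 2 : ℝ) = √(π / c) * √t := by
    rw [← sqrt_eq_rpow, ha_def, ← sqrt_mul (by positivity), one_div, ← sqrt_inv, inv_div]
    ring_nf
  have hdecay : π ^ 2 / c ≤ π / a := by
    rw [ha_def, div_div_eq_mul_div, div_le_div_iff_of_pos_right hc]
    nlinarith [pi_pos]
  -- Poisson summation trades the slowly decaying Gaussian for one that decays faster as `t` grows.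
  calc ∑' n : ℤ, exp (-c * n ^ 2 / t)
      = 1 / a ^ (1 / 2 : ℝ) * ∑' n : ℤ, exp (-(π / a) * n ^ 2) := by
        simp_rw [hexp, Real.tsum_exp_neg_mul_int_sq ha, neg_div]
    _ ≤ 1 / a ^ (1 / 2 : ℝ) * ∑' n : ℤ, exp (-(π ^ 2 / c) * n ^ 2) := by
        gcongr
        all_goals exact summable_exp_neg_mul_int_sq (by positivity)
    _ = √(π / c) * (∑' n : ℤ, exp (-(π ^ 2 / c) * n ^ 2)) * √t := by
        rw [hcoeff]; ring

lemma tsum_exp_mul_zpow_le {d : ℕ} (hd : 1 ≤ d) {c t : ℝ} (hc : 0 < c) (ht : 0 < t)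
    (v : Fin d → ℤ) :
    ∑' u : Fin d → ℤ, exp (-c * ‖v - u‖ ^ 2 / t) * (‖u‖ + 1) ^ ((1 : ℤ) - d) ≤
      d * 2 ^ d * ∑' n : ℤ, exp (-c * n ^ 2 / t) := by
  set F : (Fin d → ℤ) → ℝ := fun u => exp (-c * ‖v - u‖ ^ 2 / t) * (‖u‖ + 1) ^ ((1 : ℤ) - d)
  set G : ℤ → ℝ := fun n => exp (-c * n ^ 2 / t)
  have hF (u : Fin d → ℤ) : 0 ≤ F u := by positivity
  have hG : Summable G := by
    simpa only [G, mul_div_right_comm, neg_div] using summable_exp_neg_mul_int_sq (div_pos hc ht)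
  have key : ∑' u, ENNReal.ofReal (F u) ≤ ENNReal.ofReal (d * 2 ^ d * ∑' n, G n) := calc
    ∑' u, ENNReal.ofReal (F u) = ∑' k : ℕ, ∑ u ∈ box k, ENNReal.ofReal (F u) :=
        tsum_eq_tsum_sum_box _
    _ = ∑' k : ℕ, ENNReal.ofReal (∑ u ∈ box k, F u) := by
        simp_rw [ENNReal.ofReal_sum_of_nonneg fun u _ => hF u]
    _ ≤ ∑' k : ℕ, ENNReal.ofReal (d * 2 ^ d) * ENNReal.ofReal (G (k - normInf v)) := by
        gcongr with k
        rw [← ENNReal.ofReal_mul (by positivity)]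
        exact ENNReal.ofReal_le_ofReal (sum_box_exp_mul_zpow_le hd hc.le ht v k)
    _ = ENNReal.ofReal (d * 2 ^ d) * ∑' k : ℕ, ENNReal.ofReal (G (k - normInf v)) :=
        ENNReal.tsum_mul_left
    _ ≤ ENNReal.ofReal (d * 2 ^ d) * ∑' n : ℤ, ENNReal.ofReal (G n) := by
        gcongr
        exact ENNReal.tsum_comp_le_tsum_of_injective (fun a b h => by simpa using h) _
    _ = ENNReal.ofReal (d * 2 ^ d * ∑' n, G n) := by
        rw [← ENNReal.ofReal_tsum_of_nonneg (fun n => by positivity) hG,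
          ← ENNReal.ofReal_mul (by positivity)]
  calc ∑' u, F u = (∑' u, ENNReal.ofReal (F u)).toReal := by
        rw [ENNReal.tsum_toReal_eq fun _ => ENNReal.ofReal_ne_top]
        simp only [ENNReal.toReal_ofReal (hF _)]
    _ ≤ d * 2 ^ d * ∑' n, G n := ENNReal.toReal_le_of_le_ofReal (by positivity) key

/-- For every `d ≥ 1` and `c > 0` there is `C < ∞` such that for every `v ∈ ℤ^d`
and every `t ≥ 1`:
`Σ_{w ∈ ℤ^d} exp(−c|w|²/t)·(|v−w|+1)^{1−d} ≤ C·t^{1/2}`. -/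
theorem gaussian_convolution_bound (d : ℕ) (hd : 1 ≤ d) (c : ℝ) (hc : 0 < c) :
    ∃ C : ℝ, ∀ v : Fin d → ℤ, ∀ t : ℝ, 1 ≤ t →
      (∑' w : Fin d → ℤ,
        Real.exp (-c * ((normInf w : ℝ)) ^ 2 / t) *
          (((normInf (v - w) : ℝ)) + 1) ^ ((1 : ℤ) - (d : ℤ))) ≤ C * Real.sqrt t := by
  refine ⟨d * 2 ^ d * (√(π / c) * ∑' n : ℤ, exp (-(π ^ 2 / c) * n ^ 2)), fun v t ht => ?_⟩
  rw [← (Equiv.subLeft v).tsum_eq]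
  simp only [Equiv.subLeft_apply, sub_sub_cancel, normInf_eq_norm]
  calc _ ≤ d * 2 ^ d * ∑' n : ℤ, exp (-c * n ^ 2 / t) :=
        tsum_exp_mul_zpow_le hd hc (by linarith) v
    _ ≤ d * 2 ^ d * (√(π / c) * (∑' n : ℤ, exp (-(π ^ 2 / c) * n ^ 2)) * √t) := by
        gcongr
        exact tsum_exp_neg_mul_int_sq_div_le hc ht
    _ = _ := by ring
end
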